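/- Let d₁, d₂ ≥ 1, and let L be a Latin square of order d₁d₂ on Z_{d₁d₂}. Let f : Z_{d₁} × Z_{d₂} → Z_{d₁d₂} be the bijection f(x,y) = d₂x + y, and set ω_r = exp(2πi/r). For n ∈ Z_{d₁}, m ∈ Z_{d₂}, l ∈ Z_{d₁d₂}, define |φ_{n,m,l}⟩ = (1/√(d₁d₂)) Σ_{i∈Z_{d₁}} Σ_{j∈Z_{d₂}} ω_{d₁}^{ni} ω_{d₂}^{mj} |i⟩ ⊗ |j⟩ ⊗ |L(l, f(i,j))⟩. Then the d₁²d₂² vectors {|φ_{n,m,l}⟩} form an orthonormal basis of C^{d₁} ⊗ C^{d₂} ⊗ C^{d₁d₂}. -/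

import Mathlib

open Complex Finset


open Complex

/-- The vector `|φ_{n,m,l}⟩` in `C^{d₁} ⊗ C^{d₂} ⊗ C^{d₁d₂}` built from a Latin square
`L` of order `d₁d₂`, with `f(i,j) = d₂·i + j`: its component at `|i⟩⊗|j⟩⊗|r⟩` is
`(1/√(d₁d₂))·ω_{d₁}^{ni}·ω_{d₂}^{mj}·[L(l,f(i,j)) = r]`. -/
noncomputable def phiVec2 (d₁ d₂ : ℕ) [NeZero d₁] [NeZero d₂] [NeZero (d₁ * d₂)]
    (L : ZMod (d₁ * d₂) → ZMod (d₁ * d₂) → ZMod (d₁ * d₂))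
    (nml : ZMod d₁ × ZMod d₂ × ZMod (d₁ * d₂)) :
    EuclideanSpace ℂ (ZMod d₁ × ZMod d₂ × ZMod (d₁ * d₂)) :=
  WithLp.toLp 2 fun ijr : ZMod d₁ × ZMod d₂ × ZMod (d₁ * d₂) =>
    ((Real.sqrt (d₁ * d₂) : ℂ))⁻¹ *
      Complex.exp (2 * Real.pi * Complex.I / d₁) ^ (nml.1.val * ijr.1.val) *
      Complex.exp (2 * Real.pi * Complex.I / d₂) ^ (nml.2.1.val * ijr.2.1.val) *
      (if L nml.2.2 (((d₂ * ijr.1.val + ijr.2.1.val : ℕ)) : ZMod (d₁ * d₂)) = ijr.2.2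
        then 1 else 0)

lemma sum_zpow_root (d : ℕ) [NeZero d] (k : ℤ) :
    ∑ i : ZMod d, (Complex.exp (2 * Real.pi * Complex.I / d)) ^ (k * (i.val : ℤ)) =
      if (d : ℤ) ∣ k then (d : ℂ) else 0 := by
  set ζ := Complex.exp (2 * Real.pi * Complex.I / d) with hζ
  have hprim : IsPrimitiveRoot ζ d := Complex.isPrimitiveRoot_exp d (NeZero.ne d)
  have hstep : ∀ i : ZMod d, ζ ^ (k * (i.val : ℤ)) = (ζ ^ k) ^ (i.val) := by
    intro i; rw [zpow_mul, zpow_natCast]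
  simp only [hstep]
  have hsum : ∑ i : ZMod d, (ζ ^ k) ^ (i.val) = ∑ i ∈ Finset.range d, (ζ ^ k) ^ i := by
    obtain ⟨m, rfl⟩ := Nat.exists_eq_succ_of_ne_zero (NeZero.ne d)
    exact Fin.sum_univ_eq_sum_range (fun i => (ζ ^ k) ^ i) (m + 1)
  rw [hsum]
  by_cases hdvd : (d : ℤ) ∣ k
  · have h1 : ζ ^ k = 1 := by
      obtain ⟨c, rfl⟩ := hdvd
      rw [zpow_mul]; norm_cast; rw [hprim.pow_eq_one, one_zpow]
    simp [h1, hdvd]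
  · have hne : ζ ^ k ≠ 1 := fun h => hdvd ((hprim.zpow_eq_one_iff_dvd k).mp h)
    have hpow : (ζ ^ k) ^ d = 1 := by
      rw [← zpow_natCast, ← zpow_mul, mul_comm, zpow_mul]
      norm_cast; rw [hprim.pow_eq_one, one_zpow]
    rw [geom_sum_eq hne d, hpow]
    simp [hdvd]

lemma dvd_sub_iff_eq (d : ℕ) [NeZero d] (n n' : ZMod d) :
    ((d : ℤ) ∣ ((n'.val : ℤ) - (n.val : ℤ))) ↔ n = n' := by
  rw [← ZMod.intCast_zmod_eq_zero_iff_dvd]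
  push_cast
  rw [ZMod.natCast_rightInverse n, ZMod.natCast_rightInverse n', sub_eq_zero, eq_comm]

lemma conj_root (d : ℕ) :
    (starRingEnd ℂ) (Complex.exp (2 * Real.pi * Complex.I / d)) =
      (Complex.exp (2 * Real.pi * Complex.I / d))⁻¹ := by
  rw [← Complex.exp_conj, ← Complex.exp_neg]
  congr 1
  simp [map_div₀, map_mul, Complex.conj_I, Complex.conj_ofReal, map_ofNat]
  ring

lemma conj_pow_mul_pow (d : ℕ) (a b c : ℕ) :
    (starRingEnd ℂ) (Complex.exp (2 * Real.pi * Complex.I / d)) ^ (a * c) *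
      (Complex.exp (2 * Real.pi * Complex.I / d)) ^ (b * c) =
      (Complex.exp (2 * Real.pi * Complex.I / d)) ^ (((b : ℤ) - (a : ℤ)) * (c : ℤ)) := by
  set ζ := Complex.exp (2 * Real.pi * Complex.I / d)
  have hne : ζ ≠ 0 := Complex.exp_ne_zero _
  rw [conj_root, ← zpow_natCast (Complex.exp (2 * Real.pi * Complex.I / d))⁻¹ (a * c),
    ← zpow_natCast ζ (b * c), inv_zpow, ← zpow_neg, ← zpow_add₀ hne]
  congr 1
  push_cast
  ring

lemma sum_r_ind (D : ℕ) [NeZero D] (P Q : ZMod D) (A B : ℂ) :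
    ∑ r : ZMod D, (A * (if P = r then (1:ℂ) else 0)) * (B * (if Q = r then (1:ℂ) else 0))
      = A * B * (if P = Q then 1 else 0) := by
  simp only [mul_ite, mul_one, mul_zero, ite_mul, zero_mul]
  rw [Finset.sum_ite_eq]
  simp [Finset.mem_univ]

lemma inner_phi (d₁ d₂ : ℕ) [NeZero d₁] [NeZero d₂] [NeZero (d₁ * d₂)]
    (L : ZMod (d₁ * d₂) → ZMod (d₁ * d₂) → ZMod (d₁ * d₂))
    (hcol : ∀ c, Function.Injective fun l => L l c)
    (a b : ZMod d₁ × ZMod d₂ × ZMod (d₁ * d₂)) :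
    (inner ℂ (phiVec2 d₁ d₂ L a) (phiVec2 d₁ d₂ L b) : ℂ) = if a = b then 1 else 0 := by
  obtain ⟨n, m, l⟩ := a
  obtain ⟨n', m', l'⟩ := b
  rw [PiLp.inner_apply]
  simp only [RCLike.inner_apply', phiVec2, Fintype.sum_prod_type, map_mul, map_pow,
    apply_ite (starRingEnd ℂ), map_one, map_zero]
  simp only [sum_r_ind]
  by_cases hll : l = l'
  · subst hll
    simp only [if_pos rfl, mul_one]
    have hterm : ∀ (i : ZMod d₁) (j : ZMod d₂),
        ((starRingEnd ℂ) ((Real.sqrt (d₁ * d₂) : ℂ))⁻¹ *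
          (starRingEnd ℂ) (Complex.exp (2 * Real.pi * Complex.I / d₁)) ^ (n.val * i.val) *
          (starRingEnd ℂ) (Complex.exp (2 * Real.pi * Complex.I / d₂)) ^ (m.val * j.val)) *
        (((Real.sqrt (d₁ * d₂) : ℂ))⁻¹ *
          Complex.exp (2 * Real.pi * Complex.I / d₁) ^ (n'.val * i.val) *
          Complex.exp (2 * Real.pi * Complex.I / d₂) ^ (m'.val * j.val)) =
        ((starRingEnd ℂ) ((Real.sqrt (d₁ * d₂) : ℂ))⁻¹ * ((Real.sqrt (d₁ * d₂) : ℂ))⁻¹) *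
          (Complex.exp (2 * Real.pi * Complex.I / d₁) ^ (((n'.val : ℤ) - (n.val : ℤ)) * (i.val : ℤ))) *
          (Complex.exp (2 * Real.pi * Complex.I / d₂) ^ (((m'.val : ℤ) - (m.val : ℤ)) * (j.val : ℤ))) := by
      intro i j
      rw [← conj_pow_mul_pow d₁ n.val n'.val i.val, ← conj_pow_mul_pow d₂ m.val m'.val j.val]
      ring
    simp only [hterm]
    simp only [← Finset.mul_sum, ← Finset.sum_mul]
    rw [sum_zpow_root d₁, sum_zpow_root d₂, if_pos trivial, mul_one]
    simp only [dvd_sub_iff_eq]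
    have hpos : (0:ℝ) < (d₁:ℝ) * d₂ := by
      have h1 := Nat.pos_of_ne_zero (NeZero.ne d₁)
      have h2 := Nat.pos_of_ne_zero (NeZero.ne d₂)
      positivity
    have hs : ((Real.sqrt (d₁ * d₂) : ℂ)) * ((Real.sqrt (d₁ * d₂) : ℂ)) = (d₁ : ℂ) * d₂ := by
      rw [← Complex.ofReal_mul, Real.mul_self_sqrt hpos.le]
      push_cast; ring
    have hne : ((Real.sqrt (d₁ * d₂) : ℂ)) ≠ 0 := by
      rw [Complex.ofReal_ne_zero]
      exact (Real.sqrt_pos.mpr hpos).ne'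
    have hK : (starRingEnd ℂ) ((Real.sqrt (d₁ * d₂) : ℂ))⁻¹ * ((Real.sqrt (d₁ * d₂) : ℂ))⁻¹
        = ((d₁ : ℂ) * d₂)⁻¹ := by
      rw [map_inv₀, Complex.conj_ofReal, ← mul_inv, hs]
    rw [hK]
    have hd1 : (d₁ : ℂ) ≠ 0 := Nat.cast_ne_zero.mpr (NeZero.ne d₁)
    have hd2 : (d₂ : ℂ) ≠ 0 := Nat.cast_ne_zero.mpr (NeZero.ne d₂)
    by_cases h1 : n = n' <;> by_cases h2 : m = m' <;>
      simp [h1, h2] <;> field_simp <;> ring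
  · have hz : ∀ c : ZMod (d₁ * d₂), ¬ (L l c = L l' c) := fun c h => hll (hcol c h)
    simp [hz, hll, Prod.ext_iff]


/-- For `d₁, d₂ ≥ 1` and a Latin square `L` of order `d₁d₂`, the
`d₁²d₂²` vectors `|φ_{n,m,l}⟩` form an orthonormal basis of
`C^{d₁} ⊗ C^{d₂} ⊗ C^{d₁d₂}`. -/
theorem phiVec2_orthonormal_basis (d₁ d₂ : ℕ) [NeZero d₁] [NeZero d₂] [NeZero (d₁ * d₂)]
    (L : ZMod (d₁ * d₂) → ZMod (d₁ * d₂) → ZMod (d₁ * d₂))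
    (hrow : ∀ l, Function.Bijective (L l))
    (hcol : ∀ c, Function.Bijective fun l => L l c) :
    Orthonormal ℂ (phiVec2 d₁ d₂ L) ∧
      Submodule.span ℂ (Set.range (phiVec2 d₁ d₂ L)) = ⊤ := by
  have orth : Orthonormal ℂ (phiVec2 d₁ d₂ L) := by
    rw [orthonormal_iff_ite]
    intro a b
    exact inner_phi d₁ d₂ L (fun c => (hcol c).injective) a b
  refine ⟨orth, ?_⟩
  apply LinearIndependent.span_eq_top_of_card_eq_finrank orth.linearIndependent
  rw [finrank_euclideanSpace]
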